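/- If f satisfies the third-order ODE f''' + 4μf' + 2μ'f = 0 where μ is differentiable, and (φ₀, φ₁) is a fundamental pair of solutions of φ'' + μφ = 0 with Wronskian 1, then f is a linear combination of φ₀², φ₀φ₁, and φ₁². Conversely, for any constants c₀, c₁, c₂, the function f = -c₀φ₀² - 2c₁φ₀φ₁ - c₂φ₁² satisfies f''' + 4μf' + 2μ'f = 0. -/

import Mathlib

private lemma const_on_of_hasDerivAt_zero {I : Set ℝ} (hIopen : IsOpen I) (hIconv : Convex ℝ I)
    {g : ℝ → ℝ} (h : ∀ x ∈ I, HasDerivAt g 0 x) {x y : ℝ} (hx : x ∈ I) (hy : y ∈ I) :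
    g x = g y := by
  apply hIconv.is_const_of_fderivWithin_eq_zero
    (fun z hz => ((h z hz).differentiableAt).differentiableWithinAt) _ hx hy
  intro z hz
  rw [fderivWithin_of_isOpen hIopen hz, ((h z hz).hasFDerivAt).fderiv]
  ext; simp

/-- If `f''' + 4μf' + 2μ'f = 0` and `(φ₀, φ₁)` is a normalized pair of solutions
of `φ'' + μφ = 0` (Wronskian 1), then `f = -c₀φ₀² - 2c₁φ₀φ₁ - c₂φ₁²` for some
constants; conversely every such combination satisfies the third-order ODE. -/
theorem stmt_7 (I : Set ℝ) (hIopen : IsOpen I) (hIconv : Convex ℝ I) (hIne : I.Nonempty)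
    (μ μ' φ₀ φ₁ φ₀' φ₁' φ₀'' φ₁'' : ℝ → ℝ)
    (hμ : ∀ x ∈ I, HasDerivAt μ (μ' x) x) (hμ' : ContinuousOn μ' I)
    (h0 : ∀ x ∈ I, HasDerivAt φ₀ (φ₀' x) x)
    (h0' : ∀ x ∈ I, HasDerivAt φ₀' (φ₀'' x) x)
    (h1 : ∀ x ∈ I, HasDerivAt φ₁ (φ₁' x) x)
    (h1' : ∀ x ∈ I, HasDerivAt φ₁' (φ₁'' x) x)
    (hode0 : ∀ x ∈ I, φ₀'' x + μ x * φ₀ x = 0)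
    (hode1 : ∀ x ∈ I, φ₁'' x + μ x * φ₁ x = 0)
    (hW : ∀ x ∈ I, φ₀ x * φ₁' x - φ₁ x * φ₀' x = 1)
    (f f' f'' f''' : ℝ → ℝ)
    (hf : ∀ x ∈ I, HasDerivAt f (f' x) x)
    (hf' : ∀ x ∈ I, HasDerivAt f' (f'' x) x)
    (hf'' : ∀ x ∈ I, HasDerivAt f'' (f''' x) x) :
    ((∀ x ∈ I, f''' x + 4 * μ x * f' x + 2 * μ' x * f x = 0) →
      ∃ c₀ c₁ c₂ : ℝ, ∀ x ∈ I,
        f x = -c₀ * φ₀ x ^ 2 - 2 * c₁ * φ₀ x * φ₁ x - c₂ * φ₁ x ^ 2) ∧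
    (∀ c₀ c₁ c₂ : ℝ, ∀ x ∈ I,
      deriv (deriv (deriv (fun t => -c₀ * φ₀ t ^ 2 - 2 * c₁ * φ₀ t * φ₁ t - c₂ * φ₁ t ^ 2))) x
        + 4 * μ x * deriv (fun t => -c₀ * φ₀ t ^ 2 - 2 * c₁ * φ₀ t * φ₁ t - c₂ * φ₁ t ^ 2) x
        + 2 * μ' x * (-c₀ * φ₀ x ^ 2 - 2 * c₁ * φ₀ x * φ₁ x - c₂ * φ₁ x ^ 2) = 0) := by
  constructor
  · -- forward direction
    intro hODE
    obtain ⟨x₀, hx₀⟩ := hIne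
    -- the three "constants of motion"
    set α₀ : ℝ → ℝ := fun x =>
      φ₁' x * φ₁' x * f x - φ₁ x * φ₁' x * f' x + φ₁ x * φ₁ x * (f'' x / 2 + μ x * f x) with hα₀
    set α₁ : ℝ → ℝ := fun x =>
      (φ₀ x * φ₁' x + φ₀' x * φ₁ x) * f' x - 2 * (φ₀' x * φ₁' x * f x)
        - φ₀ x * φ₁ x * (f'' x + 2 * (μ x * f x)) with hα₁
    set α₂ : ℝ → ℝ := fun x =>
      φ₀' x * φ₀' x * f x - φ₀ x * φ₀' x * f' x + φ₀ x * φ₀ x * (f'' x / 2 + μ x * f x) with hα₂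
    have hd0 : ∀ x ∈ I, HasDerivAt α₀ 0 x := by
      intro x hx
      have H := ((((h1' x hx).mul (h1' x hx)).mul (hf x hx)).sub
          (((h1 x hx).mul (h1' x hx)).mul (hf' x hx))).add
          (((h1 x hx).mul (h1 x hx)).mul
            (((hf'' x hx).div_const 2).add ((hμ x hx).mul (hf x hx))))
      exact H.congr_deriv (by
        simp only [Pi.mul_apply, Pi.add_apply, Pi.sub_apply, Pi.div_apply]
        linear_combination (2 * φ₁' x * f x - φ₁ x * f' x) * hode1 x hx
          + (φ₁ x * φ₁ x / 2) * hODE x hx)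
    have hd1 : ∀ x ∈ I, HasDerivAt α₁ 0 x := by
      intro x hx
      have H := (((((h0 x hx).mul (h1' x hx)).add ((h0' x hx).mul (h1 x hx))).mul
          (hf' x hx)).sub
          ((((h0' x hx).mul (h1' x hx)).mul (hf x hx)).const_mul 2)).sub
          (((h0 x hx).mul (h1 x hx)).mul
            ((hf'' x hx).add (((hμ x hx).mul (hf x hx)).const_mul 2)))
      exact H.congr_deriv (by
        simp only [Pi.mul_apply, Pi.add_apply, Pi.sub_apply, Pi.div_apply]
        linear_combination (φ₁ x * f' x - 2 * φ₁' x * f x) * hode0 x hx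
          + (φ₀ x * f' x - 2 * φ₀' x * f x) * hode1 x hx
          - (φ₀ x * φ₁ x) * hODE x hx)
    have hd2 : ∀ x ∈ I, HasDerivAt α₂ 0 x := by
      intro x hx
      have H := ((((h0' x hx).mul (h0' x hx)).mul (hf x hx)).sub
          (((h0 x hx).mul (h0' x hx)).mul (hf' x hx))).add
          (((h0 x hx).mul (h0 x hx)).mul
            (((hf'' x hx).div_const 2).add ((hμ x hx).mul (hf x hx))))
      exact H.congr_deriv (by
        simp only [Pi.mul_apply, Pi.add_apply, Pi.sub_apply, Pi.div_apply]
        linear_combination (2 * φ₀' x * f x - φ₀ x * f' x) * hode0 x hx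
          + (φ₀ x * φ₀ x / 2) * hODE x hx)
    refine ⟨-α₀ x₀, -(α₁ x₀ / 2), -α₂ x₀, fun x hx => ?_⟩
    have e0 : α₀ x = α₀ x₀ := const_on_of_hasDerivAt_zero hIopen hIconv hd0 hx hx₀
    have e1 : α₁ x = α₁ x₀ := const_on_of_hasDerivAt_zero hIopen hIconv hd1 hx hx₀
    have e2 : α₂ x = α₂ x₀ := const_on_of_hasDerivAt_zero hIopen hIconv hd2 hx hx₀
    rw [← e0, ← e1, ← e2]
    simp only [hα₀, hα₁, hα₂]
    linear_combination (-((φ₀ x * φ₁' x - φ₁ x * φ₀' x + 1) * f x)) * hW x hx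
  · -- converse direction
    intro c₀ c₁ c₂ x hx
    set g : ℝ → ℝ := fun t => -c₀ * φ₀ t ^ 2 - 2 * c₁ * φ₀ t * φ₁ t - c₂ * φ₁ t ^ 2 with hg
    set g1 : ℝ → ℝ := fun t => -c₀ * (2 * (φ₀ t * φ₀' t))
      - 2 * c₁ * (φ₀' t * φ₁ t + φ₀ t * φ₁' t) - c₂ * (2 * (φ₁ t * φ₁' t)) with hg1
    set g2 : ℝ → ℝ := fun t => -c₀ * (2 * (φ₀' t * φ₀' t) - 2 * (μ t * (φ₀ t * φ₀ t)))
      - 2 * c₁ * (2 * (φ₀' t * φ₁' t) - 2 * (μ t * (φ₀ t * φ₁ t)))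
      - c₂ * (2 * (φ₁' t * φ₁' t) - 2 * (μ t * (φ₁ t * φ₁ t))) with hg2
    set g3 : ℝ → ℝ := fun t =>
      -c₀ * (-(8 * (μ t * (φ₀ t * φ₀' t))) - 2 * (μ' t * (φ₀ t * φ₀ t)))
      - 2 * c₁ * (-(4 * (μ t * (φ₀' t * φ₁ t + φ₀ t * φ₁' t))) - 2 * (μ' t * (φ₀ t * φ₁ t)))
      - c₂ * (-(8 * (μ t * (φ₁ t * φ₁' t))) - 2 * (μ' t * (φ₁ t * φ₁ t))) with hg3
    have hD1 : ∀ y ∈ I, HasDerivAt g (g1 y) y := by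
      intro y hy
      have H := ((((h0 y hy).pow 2).const_mul (-c₀)).sub
          ((((h0 y hy).const_mul (2 * c₁)).mul (h1 y hy)))).sub
          (((h1 y hy).pow 2).const_mul c₂)
      exact H.congr_deriv (by push_cast; ring)
    have hD2 : ∀ y ∈ I, HasDerivAt g1 (g2 y) y := by
      intro y hy
      have H := (((((h0 y hy).mul (h0' y hy)).const_mul 2).const_mul (-c₀)).sub
          ((((h0' y hy).mul (h1 y hy)).add ((h0 y hy).mul (h1' y hy))).const_mul (2 * c₁))).sub
          ((((h1 y hy).mul (h1' y hy)).const_mul 2).const_mul c₂)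
      exact H.congr_deriv (by
        linear_combination (-2 * c₀ * φ₀ y - 2 * c₁ * φ₁ y) * hode0 y hy
          + (-2 * c₁ * φ₀ y - 2 * c₂ * φ₁ y) * hode1 y hy)
    have hD3 : ∀ y ∈ I, HasDerivAt g2 (g3 y) y := by
      intro y hy
      have H := ((((((h0' y hy).mul (h0' y hy)).const_mul 2).sub
            ((((hμ y hy).mul ((h0 y hy).mul (h0 y hy)))).const_mul 2)).const_mul (-c₀)).sub
          (((((h0' y hy).mul (h1' y hy)).const_mul 2).sub
            ((((hμ y hy).mul ((h0 y hy).mul (h1 y hy)))).const_mul 2)).const_mul (2 * c₁))).sub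
          (((((h1' y hy).mul (h1' y hy)).const_mul 2).sub
            ((((hμ y hy).mul ((h1 y hy).mul (h1 y hy)))).const_mul 2)).const_mul c₂)
      exact H.congr_deriv (by
        simp only [Pi.mul_apply, Pi.add_apply, Pi.sub_apply, Pi.div_apply]
        linear_combination (-4 * c₀ * φ₀' y - 4 * c₁ * φ₁' y) * hode0 y hy
          + (-4 * c₁ * φ₀' y - 4 * c₂ * φ₁' y) * hode1 y hy)
    have ed1 : ∀ y ∈ I, deriv g y = g1 y := fun y hy => (hD1 y hy).deriv
    have hDg2 : ∀ y ∈ I, HasDerivAt (deriv g) (g2 y) y := by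
      intro y hy
      refine (hD2 y hy).congr_of_eventuallyEq ?_
      filter_upwards [hIopen.mem_nhds hy] with z hz using (ed1 z hz).symm ▸ rfl
    have ed2 : ∀ y ∈ I, deriv (deriv g) y = g2 y := fun y hy => (hDg2 y hy).deriv
    have hDg3 : HasDerivAt (deriv (deriv g)) (g3 x) x := by
      refine (hD3 x hx).congr_of_eventuallyEq ?_
      filter_upwards [hIopen.mem_nhds hx] with z hz using (ed2 z hz).symm ▸ rfl
    have ed3 : deriv (deriv (deriv g)) x = g3 x := hDg3.deriv
    rw [ed3, ed1 x hx]
    simp only [hg1, hg3]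
    ring
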